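/- Let G be a finite commutative group with |G| = q, and let A, A′ ⊆ G be standard complements. Then λ(A) · λ(A′) = 1/q, λ⁻(A) · λ⁺(A′) = 1/q, and λ±(A) · λ±(A′) = 1/q. -/
import Mathlib


open scoped Pointwise ComplexOrder

noncomputable section

def IsStandard {G : Type*} [AddCommGroup G] (A : Set G) : Prop :=
  A = -A ∧ (0 : G) ∈ A

def Delta {G : Type*} [AddCommGroup G] (A : Set G) : ℕ :=
  sSup {n | ∃ B : Finset G, ((B : Set G) - (B : Set G)) ∩ A = {0} ∧ B.card = n}

def DeltaBar {G : Type*} [AddCommGroup G] (A : Set G) : ℕ :=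
  sSup {n | ∃ B : Finset G, ((B : Set G) - (B : Set G)) ⊆ A ∧ B.card = n}

def deltaL {G : Type*} [AddCommGroup G] [Fintype G] (A : Set G) : ℝ :=
  (Delta A : ℝ) / (Fintype.card G : ℝ)

def deltaU {G : Type*} [AddCommGroup G] (A : Set G) : ℝ :=
  1 / (DeltaBar A : ℝ)

def ftrans {G : Type*} [AddCommGroup G] [Fintype G] (f : G → ℝ) (γ : AddChar G Circle) : ℂ :=
  ∑ x, (γ x : ℂ) * (f x : ℂ)

def PosFT {G : Type*} [AddCommGroup G] [Fintype G] (f : G → ℝ) : Prop :=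
  ∀ γ : AddChar G Circle, 0 ≤ ftrans f γ

def lamSet {G : Type*} [AddCommGroup G] [Fintype G] (S : Set (G → ℝ)) : Set ℝ :=
  {r | ∃ f ∈ S, PosFT f ∧ (∑ x, f x) ≠ 0 ∧ r = f 0 / ∑ x, f x}

def lam {G : Type*} [AddCommGroup G] [Fintype G] (A : Set G) : ℝ :=
  sInf (lamSet {f | f ≠ 0 ∧ ∀ x ∉ A, f x = 0})

def lamMinus {G : Type*} [AddCommGroup G] [Fintype G] (A : Set G) : ℝ :=
  sInf (lamSet {f | f ≠ 0 ∧ ∀ x ∉ A, f x ≤ 0})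

def lamPlus {G : Type*} [AddCommGroup G] [Fintype G] (A : Set G) : ℝ :=
  sInf (lamSet {f | f ≠ 0 ∧ (∀ x ∉ A, f x = 0) ∧ ∀ x ∈ A, 0 ≤ f x})

def lamPM {G : Type*} [AddCommGroup G] [Fintype G] (A : Set G) : ℝ :=
  sInf (lamSet {f | f ≠ 0 ∧ (∀ x ∉ A, f x ≤ 0) ∧ ∀ x ∈ A, 0 ≤ f x})

namespace Stmt8Aux

open Topology

set_option linter.unusedSectionVars false
set_option maxHeartbeats 1000000

section Cone

variable {κ : Type*} [Fintype κ]

lemma isClosed_cone : ∀ (n : ℕ) (v : Fin n → κ → ℝ),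
    IsClosed {w : κ → ℝ | ∃ c : Fin n → ℝ, (∀ i, 0 ≤ c i) ∧ w = ∑ i, c i • v i} := by
  intro n
  induction n with
  | zero =>
    intro v
    have hs : {w : κ → ℝ | ∃ c : Fin 0 → ℝ, (∀ i, 0 ≤ c i) ∧ w = ∑ i, c i • v i} = {0} := by
      ext w
      simp only [Set.mem_setOf_eq, Set.mem_singleton_iff]
      constructor
      · rintro ⟨c, _, rfl⟩; simp
      · rintro rfl; exact ⟨Fin.elim0, fun i => i.elim0, by simp⟩
    rw [hs]
    exact isClosed_singleton
  | succ n ih =>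
    intro v
    by_cases hli : LinearIndependent ℝ v
    · let T : (Fin (n+1) → ℝ) →ₗ[ℝ] (κ → ℝ) :=
        { toFun := fun c => ∑ i, c i • v i
          map_add' := fun c c' => by
            simp only [Pi.add_apply, add_smul]
            rw [Finset.sum_add_distrib]
          map_smul' := fun r c => by
            simp only [Pi.smul_apply, smul_eq_mul, RingHom.id_apply, Finset.smul_sum, smul_smul] }
      have hinj : LinearMap.ker T = ⊥ := by
        rw [LinearMap.ker_eq_bot']
        intro c hc
        have := Fintype.linearIndependent_iff.1 hli c hc
        funext i
        exact this i
      have hemb : IsClosedEmbedding T := LinearMap.isClosedEmbedding_of_injective hinj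
      have hset : {w : κ → ℝ | ∃ c : Fin (n+1) → ℝ, (∀ i, 0 ≤ c i) ∧ w = ∑ i, c i • v i}
          = T '' {c | ∀ i, 0 ≤ c i} := by
        ext w
        constructor
        · rintro ⟨c, hc, rfl⟩; exact ⟨c, hc, rfl⟩
        · rintro ⟨c, hc, rfl⟩; exact ⟨c, hc, rfl⟩
      rw [hset]
      refine hemb.isClosedMap _ ?_
      have horth : {c : Fin (n+1) → ℝ | ∀ i, 0 ≤ c i} = ⋂ i, {c | 0 ≤ c i} := by
        ext c; simp
      rw [horth]
      exact isClosed_iInter fun i => isClosed_le continuous_const (continuous_apply i)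
    · obtain ⟨g, hgsum, j0, hgj0⟩ := Fintype.not_linearIndependent_iff.1 hli
      obtain ⟨d, hdsum, hdneg⟩ : ∃ d : Fin (n+1) → ℝ, (∑ i, d i • v i = 0) ∧ ∃ i, d i < 0 := by
        by_cases hneg : ∃ i, g i < 0
        · exact ⟨g, hgsum, hneg⟩
        · push_neg at hneg
          refine ⟨-g, ?_, j0, ?_⟩
          · simp only [Pi.neg_apply, neg_smul]
            rw [Finset.sum_neg_distrib, hgsum, neg_zero]
          · simp only [Pi.neg_apply]
            have : 0 < g j0 := lt_of_le_of_ne (hneg j0) (Ne.symm hgj0)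
            linarith
      have hcover : {w : κ → ℝ | ∃ c : Fin (n+1) → ℝ, (∀ i, 0 ≤ c i) ∧ w = ∑ i, c i • v i}
          = ⋃ j : Fin (n+1), {w : κ → ℝ | ∃ c : Fin n → ℝ, (∀ i, 0 ≤ c i) ∧
              w = ∑ i, c i • (v ∘ j.succAbove) i} := by
        ext w
        simp only [Set.mem_setOf_eq, Set.mem_iUnion]
        constructor
        · rintro ⟨c, hc, rfl⟩
          classical
          have hTne : (Finset.univ.filter (fun i => d i < 0)).Nonempty := by
            obtain ⟨i, hi⟩ := hdneg
            exact ⟨i, by simp [hi]⟩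
          obtain ⟨j, hjmem, hjmin⟩ := Finset.exists_min_image _ (fun i => c i / (-(d i))) hTne
          have hdj : d j < 0 := (Finset.mem_filter.1 hjmem).2
          obtain ⟨t, ht⟩ : ∃ t : ℝ, t = c j / (-(d j)) := ⟨_, rfl⟩
          rw [← ht] at hjmin
          have ht0 : 0 ≤ t := by rw [ht]; exact div_nonneg (hc j) (by linarith)
          have hc' : ∀ i, 0 ≤ c i + t * d i := by
            intro i
            by_cases hdi : d i < 0
            · have hmin := hjmin i (by simp [hdi])
              have hdi' : (0:ℝ) < -(d i) := by linarith
              have h2 : t * (-(d i)) ≤ c i := by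
                have := mul_le_mul_of_nonneg_right hmin (le_of_lt hdi')
                rwa [div_mul_cancel₀ _ (ne_of_gt hdi')] at this
              nlinarith
            · push_neg at hdi; nlinarith [mul_nonneg ht0 hdi, hc i]
          have hcj' : c j + t * d j = 0 := by
            have htd : t * d j = -c j := by
              rw [ht, div_mul_eq_mul_div, div_neg, mul_div_assoc, div_self (ne_of_lt hdj)]
              ring
            linarith
          refine ⟨j, fun i => c (j.succAbove i) + t * d (j.succAbove i), fun i => hc' _, ?_⟩
          have hsum : ∑ i, (c i + t * d i) • v i = ∑ i, c i • v i := by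
            simp only [add_smul, Finset.sum_add_distrib, mul_smul]
            rw [← Finset.smul_sum, hdsum, smul_zero, add_zero]
          rw [← hsum, Fin.sum_univ_succAbove (fun i => (c i + t * d i) • v i) j, hcj', zero_smul,
            zero_add]
          rfl
        · rintro ⟨j, c, hc, rfl⟩
          refine ⟨j.insertNth 0 c, fun i => ?_, ?_⟩
          · refine Fin.succAboveCases j ?_ ?_ i
            · simp
            · intro k; simp [hc k]
          · have hs := Fin.sum_univ_succAbove (fun i => (Fin.insertNth (α := fun _ => ℝ) j 0 c) i • v i) j
            rw [hs]
            simp only [Fin.insertNth_apply_same, Fin.insertNth_apply_succAbove, zero_smul, zero_add]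
            rfl
      rw [hcover]
      exact isClosed_iUnion_of_finite fun j => ih (v ∘ j.succAbove)

lemma cone_convex (n : ℕ) (v : Fin n → κ → ℝ) :
    Convex ℝ {w : κ → ℝ | ∃ c : Fin n → ℝ, (∀ i, 0 ≤ c i) ∧ w = ∑ i, c i • v i} := by
  rintro w ⟨c, hc, rfl⟩ w' ⟨c', hc', rfl⟩ a b ha hb hab
  refine ⟨fun i => a * c i + b * c' i, fun i => add_nonneg (mul_nonneg ha (hc i)) (mul_nonneg hb (hc' i)), ?_⟩
  simp only [add_smul, Finset.sum_add_distrib, mul_smul]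
  rw [← Finset.smul_sum, ← Finset.smul_sum]

lemma farkas {ι : Type*} [Fintype ι] (v : ι → κ → ℝ) (h : κ → ℝ)
    (H : ∀ f : κ → ℝ, (∀ i, 0 ≤ ∑ x, f x * v i x) → 0 ≤ ∑ x, f x * h x) :
    ∃ c : ι → ℝ, (∀ i, 0 ≤ c i) ∧ h = ∑ i, c i • v i := by
  classical
  obtain ⟨e⟩ := Fintype.truncEquivFin ι
  set n := Fintype.card ι
  set v' : Fin n → κ → ℝ := v ∘ e.symm with hv'
  set C := {w : κ → ℝ | ∃ c : Fin n → ℝ, (∀ i, 0 ≤ c i) ∧ w = ∑ i, c i • v' i} with hC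
  by_cases hmem : h ∈ C
  · obtain ⟨c, hc, hrep⟩ := hmem
    refine ⟨c ∘ e, fun i => hc _, ?_⟩
    rw [hrep]
    refine (Fintype.sum_equiv e _ _ fun i => ?_).symm
    simp [hv']
  · exfalso
    obtain ⟨φ, u, hφC, hφh⟩ := geometric_hahn_banach_closed_point (cone_convex n v')
      (isClosed_cone n v') hmem
    have h0C : (0 : κ → ℝ) ∈ C := ⟨0, fun i => le_refl 0, by simp⟩
    have hu0 : 0 < u := by simpa using hφC 0 h0C
    have hφnonpos : ∀ w ∈ C, φ w ≤ 0 := by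
      intro w hw
      by_contra hpos
      push_neg at hpos
      obtain ⟨c, hc, rfl⟩ := hw
      set s : ℝ := (u + 1) / φ (∑ i, c i • v' i) with hs
      have hs0 : 0 ≤ s := div_nonneg (by linarith) (le_of_lt hpos)
      have hmem2 : s • (∑ i, c i • v' i) ∈ C := by
        refine ⟨fun i => s * c i, fun i => mul_nonneg hs0 (hc i), ?_⟩
        rw [Finset.smul_sum]
        exact Finset.sum_congr rfl fun i _ => by rw [smul_smul]
      have hlt := hφC _ hmem2
      rw [map_smul, smul_eq_mul] at hlt
      have heq : s * φ (∑ i, c i • v' i) = u + 1 := div_mul_cancel₀ _ (ne_of_gt hpos)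
      linarith
    set fd : κ → ℝ := fun x => -φ (fun y => if x = y then (1:ℝ) else 0) with hfd
    have hrepr : ∀ w : κ → ℝ, φ w = -∑ x, w x * fd x := by
      intro w
      have hw : w = ∑ x : κ, w x • (fun y => if x = y then (1:ℝ) else 0) := pi_eq_sum_univ w
      calc φ w = φ (∑ x : κ, w x • (fun y => if x = y then (1:ℝ) else 0)) := by rw [← hw]
        _ = ∑ x : κ, w x * φ (fun y => if x = y then (1:ℝ) else 0) := by
            rw [map_sum]; exact Finset.sum_congr rfl fun x _ => by rw [map_smul]; rfl
        _ = -∑ x, w x * fd x := by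
            rw [← Finset.sum_neg_distrib]
            exact Finset.sum_congr rfl fun x _ => by rw [hfd]; ring
    have hfdv : ∀ i : ι, 0 ≤ ∑ x, fd x * v i x := by
      intro i
      have hvC : v i ∈ C := by
        refine ⟨fun k => if k = e i then 1 else 0, fun k => by positivity, ?_⟩
        have hout : ∀ k, (if k = e i then (1:ℝ) else 0) • v' k
            = if k = e i then v' k else (0 : κ → ℝ) := by
          intro k; split <;> simp
        simp_rw [hout]
        rw [Finset.sum_ite_eq' Finset.univ (e i) v']
        simp [hv']
      have hle := hφnonpos _ hvC
      rw [hrepr] at hle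
      have h2 : 0 ≤ ∑ x, v i x * fd x := by linarith
      calc (0:ℝ) ≤ ∑ x, v i x * fd x := h2
        _ = ∑ x, fd x * v i x := Finset.sum_congr rfl fun x _ => mul_comm _ _
    have hfinal := H fd hfdv
    have hre := hrepr h
    have hcomm : ∑ x, fd x * h x = ∑ x, h x * fd x := Finset.sum_congr rfl fun x _ => mul_comm _ _
    rw [hcomm] at hfinal
    linarith

end Cone

variable {G : Type*} [AddCommGroup G] [Fintype G]

instance : Fintype (AddChar G Circle) :=
  Fintype.ofEquiv _ AddChar.circleEquivComplex.symm.toEquiv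

lemma card_addChar_circle : Fintype.card (AddChar G Circle) = Fintype.card G := by
  rw [Fintype.card_congr AddChar.circleEquivComplex.toEquiv, AddChar.card_eq]

lemma sum_dual {a : G} (ha : a ≠ 0) : ∑ γ : AddChar G Circle, (γ a : ℂ) = 0 := by
  classical
  have := AddChar.sum_apply_eq_ite (α := G) a
  rw [if_neg ha] at this
  rw [← this]
  exact Fintype.sum_equiv AddChar.circleEquivComplex.toEquiv _ _ fun γ ↦ rfl

lemma re_ftrans (f : G → ℝ) (γ : AddChar G Circle) :
    (ftrans f γ).re = ∑ x, f x * ((γ x : ℂ)).re := by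
  rw [ftrans, Complex.re_sum]
  exact Finset.sum_congr rfl fun x _ => by
    rw [Complex.mul_re, Complex.ofReal_re, Complex.ofReal_im, mul_zero, sub_zero, mul_comm]

lemma ftrans_addf (f g : G → ℝ) (γ : AddChar G Circle) :
    ftrans (fun x => f x + g x) γ = ftrans f γ + ftrans g γ := by
  rw [ftrans, ftrans, ftrans, ← Finset.sum_add_distrib]
  exact Finset.sum_congr rfl fun x _ => by push_cast; ring

lemma ftrans_smulf (c : ℝ) (f : G → ℝ) (γ : AddChar G Circle) :
    ftrans (fun x => c * f x) γ = (c : ℂ) * ftrans f γ := by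
  rw [ftrans, ftrans, Finset.mul_sum]
  exact Finset.sum_congr rfl fun x _ => by push_cast; ring

lemma ftrans_sumf {ι : Type*} [Fintype ι] (F : ι → G → ℝ) (γ : AddChar G Circle) :
    ftrans (fun x => ∑ i, F i x) γ = ∑ i, ftrans (F i) γ := by
  simp_rw [ftrans]
  rw [Finset.sum_comm]
  exact Finset.sum_congr rfl fun x _ => by rw [Complex.ofReal_sum, Finset.mul_sum]

lemma sum_char {γ : AddChar G Circle} (hγ : γ ≠ 1) : ∑ x, (γ x : ℂ) = 0 := by
  obtain ⟨y, hy⟩ := AddChar.ne_one_iff.1 hγ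
  have h2 : (γ y : ℂ) * ∑ x, (γ x : ℂ) = ∑ x, (γ x : ℂ) := by
    rw [Finset.mul_sum]
    exact Fintype.sum_equiv (Equiv.addLeft y) _ _ fun x ↦ by
      rw [← Circle.coe_mul, ← AddChar.map_add_eq_mul]; rfl
  have h3 : ((γ y : ℂ) - 1) * ∑ x, (γ x : ℂ) = 0 := by linear_combination h2
  rcases mul_eq_zero.1 h3 with h | h
  · exact absurd (Circle.coe_eq_one.mp (by linear_combination h)) hy
  · exact h

lemma sum_char_nonneg (γ : AddChar G Circle) : 0 ≤ ∑ x, (γ x : ℂ) := by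
  rcases eq_or_ne γ 1 with rfl | h
  · simp only [AddChar.one_apply, Circle.coe_one, Finset.sum_const, nsmul_eq_mul, mul_one]
    positivity
  · rw [sum_char h]

lemma coe_neg_char (γ : AddChar G Circle) (x : G) :
    (γ (-x) : ℂ) = starRingEnd ℂ (γ x : ℂ) := by
  rw [AddChar.map_neg_eq_inv, Circle.coe_inv_eq_conj]

lemma ftrans_reChar_nonneg (γ γ' : AddChar G Circle) :
    0 ≤ ftrans (fun x => ((γ x : ℂ)).re) γ' := by
  have key : ftrans (fun x => ((γ x : ℂ)).re) γ'
      = (∑ x, ((γ' * γ) x : ℂ)) / 2 + (∑ x, ((γ' * γ⁻¹) x : ℂ)) / 2 := by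
    have hpt : ∀ x : G, (γ' x : ℂ) * ((((γ x : ℂ)).re : ℝ) : ℂ)
        = ((γ' * γ) x : ℂ) / 2 + ((γ' * γ⁻¹) x : ℂ) / 2 := by
      intro x
      rw [AddChar.mul_apply, AddChar.mul_apply, Circle.coe_mul, Circle.coe_mul,
        AddChar.inv_apply, coe_neg_char]
      have : ((((γ x : ℂ)).re : ℝ) : ℂ) = ((γ x : ℂ) + starRingEnd ℂ (γ x : ℂ)) / 2 := by
        rw [Complex.add_conj]; push_cast; ring
      rw [this]; ring
    rw [ftrans]
    simp_rw [hpt]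
    rw [Finset.sum_add_distrib, Finset.sum_div, Finset.sum_div]
  rw [key]
  have h1 := sum_char_nonneg (γ' * γ) (G := G)
  have h2 := sum_char_nonneg (γ' * γ⁻¹) (G := G)
  have half : ∀ z : ℂ, 0 ≤ z → 0 ≤ z / 2 := by
    intro z hz
    rw [div_eq_mul_inv]
    refine mul_nonneg hz ?_
    rw [(by norm_num : ((2:ℂ))⁻¹ = (((2:ℝ)⁻¹ : ℝ) : ℂ))]
    exact Complex.zero_le_real.2 (by norm_num)
  exact add_nonneg (half _ h1) (half _ h2)

lemma ftrans_const_nonneg (c : ℝ) (hc : 0 ≤ c) (γ' : AddChar G Circle) :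
    0 ≤ ftrans (fun _ => c) γ' := by
  have : ftrans (fun _ => c) γ' = (c : ℂ) * ∑ x, (γ' x : ℂ) := by
    rw [ftrans, Finset.mul_sum]
    exact Finset.sum_congr rfl fun x _ => mul_comm _ _
  rw [this]
  exact mul_nonneg (Complex.zero_le_real.2 hc) (sum_char_nonneg γ')

lemma ftrans_one_char (f : G → ℝ) : ftrans f 1 = ((∑ x, f x : ℝ) : ℂ) := by
  rw [ftrans, Complex.ofReal_sum]
  exact Finset.sum_congr rfl fun x _ => by rw [AddChar.one_apply, Circle.coe_one, one_mul]

lemma sum_ftrans (f : G → ℝ) :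
    ∑ γ : AddChar G Circle, ftrans f γ = (((Fintype.card G : ℝ) * f 0 : ℝ) : ℂ) := by
  classical
  simp_rw [ftrans]
  rw [Finset.sum_comm]
  have hx : ∀ x : G, (∑ γ : AddChar G Circle, (γ x : ℂ) * (f x : ℂ))
      = (if x = 0 then (((Fintype.card G : ℝ) * f 0 : ℝ) : ℂ) else 0) := by
    intro x
    rw [← Finset.sum_mul]
    by_cases hx0 : x = 0
    · subst hx0
      rw [if_pos rfl]
      simp only [AddChar.map_zero_eq_one, Circle.coe_one]
      rw [Finset.sum_const, Finset.card_univ, card_addChar_circle]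
      push_cast
      ring
    · rw [sum_dual hx0, zero_mul, if_neg hx0]
  simp_rw [hx]
  simp

lemma posft_zero_nonneg {f : G → ℝ} (hf : PosFT f) : 0 ≤ f 0 := by
  have h := sum_ftrans f
  have h2 : 0 ≤ ∑ γ : AddChar G Circle, ftrans f γ := Finset.sum_nonneg fun γ _ => hf γ
  rw [h, Complex.zero_le_real] at h2
  have hq : (0:ℝ) < (Fintype.card G : ℝ) := by exact_mod_cast Fintype.card_pos
  nlinarith

lemma posft_sum_le {f : G → ℝ} (hf : PosFT f) : ∑ x, f x ≤ (Fintype.card G : ℝ) * f 0 := by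
  have h := sum_ftrans f
  have h2 : ftrans f 1 ≤ ∑ γ : AddChar G Circle, ftrans f γ :=
    Finset.single_le_sum (fun γ _ => hf γ) (Finset.mem_univ 1)
  rw [h, ftrans_one_char] at h2
  exact_mod_cast h2

lemma posft_sum_nonneg {f : G → ℝ} (hf : PosFT f) : 0 ≤ ∑ x, f x := by
  have := hf 1
  rw [ftrans_one_char, Complex.zero_le_real] at this
  exact this

lemma key_ineq {f g : G → ℝ} (hf : PosFT f) (hg : PosFT g) :
    (∑ x, f x) * (∑ x, g x) ≤ (Fintype.card G : ℝ) * ∑ x, f x * g x := by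
  classical
  have conj_ftrans : ∀ (h : G → ℝ) γ, starRingEnd ℂ (ftrans h γ) = ∑ y, (γ (-y) : ℂ) * (h y : ℂ) := by
    intro h γ
    rw [ftrans, map_sum]
    exact Finset.sum_congr rfl fun y _ => by
      rw [map_mul, Complex.conj_ofReal, coe_neg_char]
  have parseval : ∑ γ : AddChar G Circle, ftrans f γ * starRingEnd ℂ (ftrans g γ)
      = (((Fintype.card G : ℝ) * ∑ x, f x * g x : ℝ) : ℂ) := by
    have expand : ∀ γ : AddChar G Circle, ftrans f γ * starRingEnd ℂ (ftrans g γ)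
        = ∑ x, ∑ y, (γ (x + -y) : ℂ) * ((f x * g y : ℝ) : ℂ) := by
      intro γ
      rw [conj_ftrans, ftrans, Finset.sum_mul_sum]
      refine Finset.sum_congr rfl fun x _ => Finset.sum_congr rfl fun y _ => ?_
      rw [AddChar.map_add_eq_mul, Circle.coe_mul]; push_cast; ring
    simp_rw [expand]
    rw [Finset.sum_comm (γ := AddChar G Circle)]
    have inner : ∀ x : G, (∑ γ : AddChar G Circle, ∑ y, (γ (x + -y) : ℂ) * ((f x * g y : ℝ) : ℂ))
        = ((Fintype.card G : ℝ) : ℂ) * ((f x * g x : ℝ) : ℂ) := by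
      intro x
      rw [Finset.sum_comm]
      have hy : ∀ y : G, (∑ γ : AddChar G Circle, (γ (x + -y) : ℂ) * ((f x * g y : ℝ) : ℂ))
          = (if y = x then ((Fintype.card G : ℝ) : ℂ) * ((f x * g x : ℝ) : ℂ) else 0) := by
        intro y
        rw [← Finset.sum_mul]
        by_cases hxy : y = x
        · subst hxy
          simp only [add_neg_cancel, if_true]
          simp only [AddChar.map_zero_eq_one, Circle.coe_one]
          rw [Finset.sum_const, Finset.card_univ, card_addChar_circle]
          push_cast
          ring
        · rw [if_neg hxy, sum_dual (fun hc => hxy (by rwa [add_neg_eq_zero] at hc : x = y).symm), zero_mul]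
      simp_rw [hy]
      simp
    simp_rw [inner]
    rw [← Finset.mul_sum]
    push_cast
    ring
  have lb : ftrans f 1 * starRingEnd ℂ (ftrans g 1)
      ≤ ∑ γ : AddChar G Circle, ftrans f γ * starRingEnd ℂ (ftrans g γ) := by
    refine Finset.single_le_sum (f := fun γ : AddChar G Circle => ftrans f γ * starRingEnd ℂ (ftrans g γ)) (fun γ _ => ?_) (Finset.mem_univ 1)
    have h1 := hf γ; have h2 := hg γ
    have hstar : starRingEnd ℂ (ftrans g γ) = ftrans g γ := by
      rw [Complex.conj_eq_iff_im]
      exact ((Complex.le_def.1 h2).2).symm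
    show 0 ≤ ftrans f γ * starRingEnd ℂ (ftrans g γ)
    rw [hstar]
    exact mul_nonneg h1 h2
  rw [parseval, ftrans_one_char, ftrans_one_char, Complex.conj_ofReal] at lb
  exact_mod_cast lb

lemma ftrans_sym (f : G → ℝ) (γ : AddChar G Circle) :
    ftrans (fun x => (f x + f (-x)) / 2) γ = (((ftrans f γ).re : ℝ) : ℂ) := by
  have h1 : ∑ x, (γ x : ℂ) * ((f (-x) : ℝ) : ℂ) = starRingEnd ℂ (ftrans f γ) := by
    have e1 : ∑ x : G, (γ x : ℂ) * ((f (-x) : ℝ) : ℂ) = ∑ x : G, (γ (-x) : ℂ) * ((f x : ℝ) : ℂ) := by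
      refine Fintype.sum_equiv (Equiv.neg G) _ _ fun x => ?_
      simp [neg_neg]
    rw [e1, ftrans, map_sum]
    exact Finset.sum_congr rfl fun x _ => by
      rw [map_mul, Complex.conj_ofReal, coe_neg_char]
  have : ftrans (fun x => (f x + f (-x)) / 2) γ = (ftrans f γ + starRingEnd ℂ (ftrans f γ)) / 2 := by
    rw [← h1, ftrans, ftrans, ← Finset.sum_add_distrib, Finset.sum_div]
    exact Finset.sum_congr rfl fun x _ => by push_cast; ring
  rw [this, Complex.add_conj]
  push_cast; ring

lemma sum_sym (f : G → ℝ) : ∑ x, (f x + f (-x)) / 2 = ∑ x, f x := by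
  have : ∑ x : G, f (-x) = ∑ x, f x := Fintype.sum_equiv (Equiv.neg G) _ _ fun x => rfl
  rw [← Finset.sum_div, Finset.sum_add_distrib, this]
  ring

lemma card_pos : (0:ℝ) < (Fintype.card G : ℝ) := by exact_mod_cast Fintype.card_pos

lemma ratio_lb {S : Set (G → ℝ)} {r : ℝ} (hr : r ∈ lamSet S) :
    1 / (Fintype.card G : ℝ) ≤ r := by
  obtain ⟨f, _, hP, hne, rfl⟩ := hr
  have hpos : 0 < ∑ x, f x := lt_of_le_of_ne (posft_sum_nonneg hP) (Ne.symm hne)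
  rw [div_le_div_iff₀ card_pos hpos, one_mul]
  rw [mul_comm]
  exact posft_sum_le hP

lemma lamSet_bdd {S : Set (G → ℝ)} : BddBelow (lamSet S) :=
  ⟨1 / (Fintype.card G : ℝ), fun r hr => ratio_lb hr⟩

lemma lamSet_nonempty [DecidableEq G] {S : Set (G → ℝ)}
    (h0 : (fun x : G => if x = 0 then (1:ℝ) else 0) ∈ S) : (lamSet S).Nonempty := by
  set f : G → ℝ := fun x => if x = 0 then (1:ℝ) else 0 with hf
  have hsum : ∑ x, f x = 1 := by
    rw [hf]
    rw [Finset.sum_ite_eq' Finset.univ (0:G) (fun _ => (1:ℝ))]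
    simp
  have hft : ∀ γ : AddChar G Circle, ftrans f γ = 1 := by
    intro γ
    rw [ftrans, hf]
    have : ∀ x : G, (γ x : ℂ) * ((if x = 0 then (1:ℝ) else 0 : ℝ) : ℂ)
        = if x = 0 then (γ x : ℂ) else 0 := by
      intro x; split <;> simp
    simp_rw [this]
    rw [Finset.sum_ite_eq' Finset.univ (0:G) (fun x => (γ x : ℂ))]
    simp
  exact ⟨1, f, h0, fun γ => by rw [hft γ]; exact zero_le_one, by rw [hsum]; exact one_ne_zero,
    by rw [hsum]; simp [hf]⟩

lemma lam_lb {S : Set (G → ℝ)} (hne : (lamSet S).Nonempty) :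
    1 / (Fintype.card G : ℝ) ≤ sInf (lamSet S) :=
  le_csInf hne fun r hr => ratio_lb hr

lemma lam_pos {S : Set (G → ℝ)} (hne : (lamSet S).Nonempty) : 0 < sInf (lamSet S) :=
  lt_of_lt_of_le (by positivity) (lam_lb hne)

lemma pair_lb {S S' : Set (G → ℝ)}
    (hsgn : ∀ f ∈ S, ∀ g ∈ S', PosFT f → PosFT g → ∀ x : G, x ≠ 0 → f x * g x ≤ 0)
    {r s : ℝ} (hr : r ∈ lamSet S) (hs : s ∈ lamSet S') :
    1 / (Fintype.card G : ℝ) ≤ r * s := by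
  classical
  obtain ⟨f, hfS, hfP, hfne, rfl⟩ := hr
  obtain ⟨g, hgS, hgP, hgne, rfl⟩ := hs
  have hfpos : 0 < ∑ x, f x := lt_of_le_of_ne (posft_sum_nonneg hfP) (Ne.symm hfne)
  have hgpos : 0 < ∑ x, g x := lt_of_le_of_ne (posft_sum_nonneg hgP) (Ne.symm hgne)
  have hk := key_ineq hfP hgP
  have hsplit : ∑ x, f x * g x ≤ f 0 * g 0 := by
    classical
    have : ∑ x, f x * g x = f 0 * g 0 + ∑ x ∈ Finset.univ.erase 0, f x * g x := by
      rw [← Finset.add_sum_erase Finset.univ _ (Finset.mem_univ (0:G))]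
    rw [this]
    have hle : ∑ x ∈ Finset.univ.erase 0, f x * g x ≤ 0 :=
      Finset.sum_nonpos fun x hx => hsgn f hfS g hgS hfP hgP x (Finset.ne_of_mem_erase hx)
    linarith
  have hchain : (∑ x, f x) * (∑ x, g x) ≤ (Fintype.card G : ℝ) * (f 0 * g 0) := by
    calc (∑ x, f x) * (∑ x, g x) ≤ (Fintype.card G : ℝ) * ∑ x, f x * g x := hk
      _ ≤ (Fintype.card G : ℝ) * (f 0 * g 0) := by
          apply mul_le_mul_of_nonneg_left hsplit (le_of_lt card_pos)
  rw [div_mul_div_comm, div_le_div_iff₀ card_pos (by positivity), one_mul]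
  nlinarith [hchain]

/-! the master construction -/

lemma collapse1 [DecidableEq G] (w u : G → ℝ) (y : G) :
    ∑ x, w x * (u x * (if y = x then 1 else 0)) = w y * u y := by
  classical
  have : ∀ x : G, w x * (u x * (if y = x then 1 else 0)) = if y = x then w x * u x else 0 := by
    intro x; split <;> simp
  simp_rw [this]
  rw [Finset.sum_ite_eq Finset.univ y (fun x => w x * u x), if_pos (Finset.mem_univ y)]

lemma collapse2 [DecidableEq G] (w : G → ℝ) (r : ℝ) (x₀ : G) :
    ∑ x, w x * (r * (if x = x₀ then 1 else 0)) = w x₀ * r := by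
  classical
  have : ∀ x : G, w x * (r * (if x = x₀ then 1 else 0)) = if x = x₀ then w x * r else 0 := by
    intro x; split <;> simp
  simp_rw [this]
  rw [Finset.sum_ite_eq' Finset.univ x₀ (fun x => w x * r), if_pos (Finset.mem_univ x₀)]

lemma master [DecidableEq G] (S : Set (G → ℝ)) (hne : (lamSet S).Nonempty) (a b : G → ℝ)
    (hmem : ∀ f : G → ℝ, (∀ γ : AddChar G Circle, 0 ≤ ∑ x, f x * ((γ x : ℂ)).re) →
      (∀ x, 0 ≤ f x * a x) → (∀ x, 0 ≤ f x * b x) → (∑ x, f x) ≠ 0 →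
      (fun x => (f x + f (-x)) / 2) ∈ S) :
    ∃ F c₁ c₂ : G → ℝ, PosFT F ∧ 0 ≤ F 0 ∧ (∀ x, 0 ≤ c₁ x) ∧ (∀ x, 0 ≤ c₂ x) ∧
      ∀ y, (if y = 0 then (1:ℝ) else 0) - sInf (lamSet S)
          = F y + c₁ y * a y + c₂ y * b y := by
  classical
  set L := sInf (lamSet S) with hL
  set v : ((AddChar G Circle) ⊕ (G ⊕ G)) → G → ℝ := fun i => match i with
    | .inl γ => fun y => ((γ y : ℂ)).re
    | .inr (.inl x) => fun y => a x * (if y = x then 1 else 0)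
    | .inr (.inr x) => fun y => b x * (if y = x then 1 else 0) with hv
  set h : G → ℝ := fun y => (if y = 0 then 1 else 0) - L with hh
  have H : ∀ f : G → ℝ, (∀ i, 0 ≤ ∑ x, f x * v i x) → 0 ≤ ∑ x, f x * h x := by
    intro f hf
    have hre : ∀ γ : AddChar G Circle, 0 ≤ ∑ x, f x * ((γ x : ℂ)).re := fun γ => hf (.inl γ)
    have ha : ∀ x, 0 ≤ f x * a x := by
      intro x
      have := hf (.inr (.inl x))
      rwa [show (∑ y, f y * v (.inr (.inl x)) y) = f x * a x by
        rw [hv]; exact collapse2 f (a x) x] at this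
    have hb : ∀ x, 0 ≤ f x * b x := by
      intro x
      have := hf (.inr (.inr x))
      rwa [show (∑ y, f y * v (.inr (.inr x)) y) = f x * b x by
        rw [hv]; exact collapse2 f (b x) x] at this
    -- pairing with h
    have hsum : ∑ x, f x * h x = f 0 - L * ∑ x, f x := by
      rw [hh]
      simp only [mul_sub]
      rw [Finset.sum_sub_distrib]
      congr 1
      · have : ∀ x : G, f x * (if x = 0 then (1:ℝ) else 0) = if x = 0 then f x else 0 := by
          intro x; split <;> simp
        simp_rw [this]
        rw [Finset.sum_ite_eq' Finset.univ (0:G) f, if_pos (Finset.mem_univ (0:G))]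
      · rw [Finset.mul_sum]
        exact Finset.sum_congr rfl fun x _ => mul_comm _ _
    rw [hsum]
    set fs : G → ℝ := fun x => (f x + f (-x)) / 2 with hfs
    have hPfs : PosFT fs := by
      intro γ
      rw [hfs, ftrans_sym f γ]
      have : 0 ≤ (ftrans f γ).re := by rw [re_ftrans]; exact hre γ
      exact_mod_cast Complex.zero_le_real.2 this
    have hfs0 : fs 0 = f 0 := by rw [hfs]; simp
    by_cases h0 : ∑ x, f x = 0
    · rw [h0, mul_zero, sub_zero, ← hfs0]
      exact posft_zero_nonneg hPfs
    · have hmem' := hmem f hre ha hb h0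
      have hsumfs : ∑ x, fs x = ∑ x, f x := sum_sym f
      have hratio : fs 0 / (∑ x, fs x) ∈ lamSet S :=
        ⟨fs, hmem', hPfs, by rw [hsumfs]; exact h0, rfl⟩
      have hLle : L ≤ fs 0 / ∑ x, fs x := csInf_le lamSet_bdd hratio
      have hsum_nonneg : 0 ≤ ∑ x, f x := by
        rw [← hsumfs]; exact posft_sum_nonneg hPfs
      have hpos : 0 < ∑ x, f x := lt_of_le_of_ne hsum_nonneg (Ne.symm h0)
      rw [hsumfs, hfs0] at hLle
      rw [le_div_iff₀ hpos] at hLle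
      linarith
  obtain ⟨c, hc, hrep⟩ := farkas v h H
  refine ⟨fun y => ∑ γ : AddChar G Circle, c (.inl γ) * ((γ y : ℂ)).re,
    fun x => c (.inr (.inl x)), fun x => c (.inr (.inr x)), ?_, ?_,
    fun x => hc _, fun x => hc _, ?_⟩
  · intro γ'
    rw [ftrans_sumf (fun γ => fun y => c (.inl γ) * ((γ y : ℂ)).re) γ']
    refine Finset.sum_nonneg fun γ _ => ?_
    rw [ftrans_smulf]
    exact mul_nonneg (Complex.zero_le_real.2 (hc _)) (ftrans_reChar_nonneg γ γ')
  · refine Finset.sum_nonneg fun γ _ => ?_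
    have : ((γ (0:G) : ℂ)).re = 1 := by
      rw [AddChar.map_zero_eq_one, Circle.coe_one, Complex.one_re]
    rw [this, mul_one]
    exact hc _
  · intro y
    have hy := congrFun hrep y
    rw [hh] at hy
    beta_reduce at hy ⊢
    have hexp : (∑ i : (AddChar G Circle) ⊕ (G ⊕ G), c i • v i) y
        = (∑ γ : AddChar G Circle, c (.inl γ) * v (.inl γ) y)
          + ((∑ x : G, c (.inr (.inl x)) * v (.inr (.inl x)) y)
          + (∑ x : G, c (.inr (.inr x)) * v (.inr (.inr x)) y)) := by
      rw [Finset.sum_apply]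
      simp only [Pi.smul_apply, smul_eq_mul]
      rw [Fintype.sum_sum_type]
      congr 1
      rw [Fintype.sum_sum_type]
    have e1 : ∑ γ : AddChar G Circle, c (.inl γ) * v (.inl γ) y
        = ∑ γ : AddChar G Circle, c (.inl γ) * ((γ y : ℂ)).re := rfl
    have e2 : ∑ x : G, c (.inr (.inl x)) * v (.inr (.inl x)) y = c (.inr (.inl y)) * a y := by
      have hpt : ∀ x : G, c (.inr (.inl x)) * v (.inr (.inl x)) y
          = (fun x => c (Sum.inr (Sum.inl x))) x * (a x * (if y = x then 1 else 0)) :=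
        fun x => rfl
      simp_rw [hpt]
      exact collapse1 _ a y
    have e3 : ∑ x : G, c (.inr (.inr x)) * v (.inr (.inr x)) y = c (.inr (.inr y)) * b y := by
      have hpt : ∀ x : G, c (.inr (.inr x)) * v (.inr (.inr x)) y
          = (fun x => c (Sum.inr (Sum.inr x))) x * (b x * (if y = x then 1 else 0)) :=
        fun x => rfl
      simp_rw [hpt]
      exact collapse1 _ b y
    rw [hy, hexp, e1, e2, e3]
    ring

lemma mem_neg_iff {A : Set G} (hA : A = -A) (x : G) : -x ∈ A ↔ x ∈ A := by
  constructor
  · intro h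
    have : x ∈ -A := Set.mem_neg.2 h
    rwa [← hA] at this
  · intro h
    rw [hA]
    exact Set.mem_neg.2 (by rwa [neg_neg])

lemma not_mem_neg {A : Set G} (hA : A = -A) {x : G} (hx : x ∉ A) : -x ∉ A :=
  fun h => hx ((mem_neg_iff hA x).1 h)

lemma mem_A_of_notMem_A' {A A' : Set G} (hA' : IsStandard A') (hU : A ∪ A' = Set.univ)
    {y : G} (hy : y ∉ A') : y ∈ A ∧ y ≠ 0 := by
  constructor
  · have : y ∈ A ∪ A' := hU ▸ Set.mem_univ y
    rcases this with h | h
    · exact h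
    · exact absurd h hy
  · rintro rfl
    exact hy hA'.2

lemma notMem_A_of_mem_A' {A A' : Set G} (hI : A ∩ A' = {0}) {y : G} (hy : y ∈ A')
    (hy0 : y ≠ 0) : y ∉ A := fun h => hy0 (by have : y ∈ A ∩ A' := ⟨h, hy⟩; rwa [hI] at this)

/-! generic upper bound construction -/

lemma sum_fs_ne {f : G → ℝ} (hsne : (∑ x, f x) ≠ 0) :
    (fun x => (f x + f (-x)) / 2) ≠ 0 := by
  intro hzero
  apply hsne
  rw [← sum_sym f]
  refine Finset.sum_eq_zero fun x _ => ?_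
  exact congrFun hzero x

/-- the common part of the three constructions: from the master output, build `g` and
conclude the upper bound for any dual class `S'` containing it. -/
lemma conclude {S' : Set (G → ℝ)} {F : G → ℝ} {L : ℝ} (hL : 0 < L)
    (hPF : PosFT F) (hmem : (fun y => F y + L) ∈ S') (hg0le : F 0 + L ≤ 1) :
    sInf (lamSet S') ≤ 1 / ((Fintype.card G : ℝ) * L) := by
  set g : G → ℝ := fun y => F y + L with hg
  have hq : (0:ℝ) < (Fintype.card G : ℝ) := card_pos
  have hgP : PosFT g := by
    intro γ'
    have h1 := ftrans_addf F (fun _ => L) γ'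
    show 0 ≤ ftrans (fun y => F y + L) γ'
    rw [h1]
    exact add_nonneg (hPF γ') (ftrans_const_nonneg L hL.le γ')
  have hgsum : ∑ x, g x = (∑ x, F x) + (Fintype.card G : ℝ) * L := by
    show ∑ x : G, (F x + L) = _
    rw [Finset.sum_add_distrib, Finset.sum_const, Finset.card_univ, nsmul_eq_mul]
  have hgsum_ge : (Fintype.card G : ℝ) * L ≤ ∑ x, g x := by
    have := posft_sum_nonneg hPF
    rw [hgsum]; linarith
  have hgsum_pos : 0 < ∑ x, g x := lt_of_lt_of_le (by positivity) hgsum_ge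
  have hmem2 : g 0 / (∑ x, g x) ∈ lamSet S' :=
    ⟨g, hmem, hgP, ne_of_gt hgsum_pos, rfl⟩
  have h3 : sInf (lamSet S') ≤ g 0 / ∑ x, g x := csInf_le lamSet_bdd hmem2
  have h4 : g 0 / (∑ x, g x) ≤ 1 / ((Fintype.card G : ℝ) * L) := by
    have hg0 : g 0 = F 0 + L := rfl
    rw [hg0]
    exact div_le_div₀ zero_le_one hg0le (by positivity) hgsum_ge
  exact le_trans h3 h4


/-! ### the three case upper bounds -/

lemma upper_case2 [DecidableEq G] (A A' : Set G) (hA : IsStandard A) (hA' : IsStandard A')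
    (hU : A ∪ A' = Set.univ) (hI : A ∩ A' = {0}) :
    lamPlus A' ≤ 1 / ((Fintype.card G : ℝ) * lamMinus A) := by
  classical
  set Sm : Set (G → ℝ) := {f | f ≠ 0 ∧ ∀ x ∉ A, f x ≤ 0} with hSm
  have hne : (lamSet Sm).Nonempty := by
    apply lamSet_nonempty
    refine ⟨?_, ?_⟩
    · intro hzero
      have h1 := congrFun hzero 0
      simp at h1
    · intro x hx
      beta_reduce
      rw [if_neg (fun h : x = 0 => hx (h ▸ hA.2))]
  have hL0 : 0 < sInf (lamSet Sm) := lam_pos hne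
  obtain ⟨F, c₁, c₂, hPF, hF0, hc₁, hc₂, hid⟩ := master Sm hne (fun _ => 0)
      (fun x => if x ∈ A then 0 else -1) (by
    intro f hre ha hb hsne
    refine ⟨sum_fs_ne hsne, ?_⟩
    intro x hx
    have hfx : f x ≤ 0 := by
      have := hb x
      beta_reduce at this
      rw [if_neg hx] at this
      linarith
    have hfnx : f (-x) ≤ 0 := by
      have := hb (-x)
      beta_reduce at this
      rw [if_neg (not_mem_neg hA.1 hx)] at this
      linarith
    show (f x + f (-x)) / 2 ≤ 0
    linarith
  )
  set L := sInf (lamSet Sm) with hLdef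
  have hidA : ∀ y ∈ A, y ≠ 0 → F y = -L := by
    intro y hyA hy0
    have h1 := hid y
    beta_reduce at h1
    rw [if_neg hy0, if_pos hyA] at h1
    simp at h1
    linarith
  have hid0 : F 0 = 1 - L := by
    have h1 := hid 0
    beta_reduce at h1
    rw [if_pos rfl, if_pos hA.2] at h1
    simp at h1
    linarith
  have hidout : ∀ y, y ∉ A → F y = c₂ y - L := by
    intro y hy
    have hy0 : y ≠ 0 := fun h => hy (h ▸ hA.2)
    have h1 := hid y
    beta_reduce at h1
    rw [if_neg hy0, if_neg hy] at h1
    simp at h1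
    linarith
  show lamPlus A' ≤ 1 / ((Fintype.card G : ℝ) * L)
  refine conclude hL0 hPF ?_ ?_
  · refine ⟨?_, ?_, ?_⟩
    · intro hzero
      have h1 := congrFun hzero 0
      simp only [Pi.zero_apply] at h1
      rw [hid0] at h1
      linarith
    · intro x hx
      obtain ⟨hxA, hx0⟩ := mem_A_of_notMem_A' hA' hU hx
      show F x + L = 0
      rw [hidA x hxA hx0]
      ring
    · intro x hx
      show 0 ≤ F x + L
      rcases eq_or_ne x 0 with rfl | hx0
      · rw [hid0]; linarith
      · have hxA : x ∉ A := notMem_A_of_mem_A' hI hx hx0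
        rw [hidout x hxA]
        have := hc₂ x
        linarith
  · rw [hid0]; linarith

lemma upper_case1 [DecidableEq G] (A A' : Set G) (hA : IsStandard A) (hA' : IsStandard A')
    (hU : A ∪ A' = Set.univ) (hI : A ∩ A' = {0}) :
    lam A' ≤ 1 / ((Fintype.card G : ℝ) * lam A) := by
  classical
  set Sm : Set (G → ℝ) := {f | f ≠ 0 ∧ ∀ x ∉ A, f x = 0} with hSm
  have hne : (lamSet Sm).Nonempty := by
    apply lamSet_nonempty
    refine ⟨?_, ?_⟩
    · intro hzero
      have h1 := congrFun hzero 0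
      simp at h1
    · intro x hx
      beta_reduce
      rw [if_neg (fun h : x = 0 => hx (h ▸ hA.2))]
  have hL0 : 0 < sInf (lamSet Sm) := lam_pos hne
  obtain ⟨F, c₁, c₂, hPF, hF0, hc₁, hc₂, hid⟩ := master Sm hne
      (fun x => if x ∈ A then 0 else 1) (fun x => if x ∈ A then 0 else -1) (by
    intro f hre ha hb hsne
    refine ⟨sum_fs_ne hsne, ?_⟩
    intro x hx
    have hzero : ∀ y : G, y ∉ A → f y = 0 := by
      intro y hy
      have h1 := ha y
      have h2 := hb y
      beta_reduce at h1 h2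
      rw [if_neg hy] at h1 h2
      have : f y ≤ 0 := by linarith
      have : 0 ≤ f y := by linarith
      linarith
    show (f x + f (-x)) / 2 = 0
    rw [hzero x hx, hzero (-x) (not_mem_neg hA.1 hx)]
    ring
  )
  set L := sInf (lamSet Sm) with hLdef
  have hidA : ∀ y ∈ A, y ≠ 0 → F y = -L := by
    intro y hyA hy0
    have h1 := hid y
    beta_reduce at h1
    rw [if_neg hy0, if_pos hyA, if_pos hyA] at h1
    simp at h1
    linarith
  have hid0 : F 0 = 1 - L := by
    have h1 := hid 0
    beta_reduce at h1
    rw [if_pos rfl, if_pos hA.2, if_pos hA.2] at h1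
    simp at h1
    linarith
  show lam A' ≤ 1 / ((Fintype.card G : ℝ) * L)
  refine conclude hL0 hPF ?_ ?_
  · refine ⟨?_, ?_⟩
    · intro hzero
      have h1 := congrFun hzero 0
      simp only [Pi.zero_apply] at h1
      rw [hid0] at h1
      linarith
    · intro x hx
      obtain ⟨hxA, hx0⟩ := mem_A_of_notMem_A' hA' hU hx
      show F x + L = 0
      rw [hidA x hxA hx0]
      ring
  · rw [hid0]; linarith

lemma upper_case3 [DecidableEq G] (A A' : Set G) (hA : IsStandard A) (hA' : IsStandard A')
    (hU : A ∪ A' = Set.univ) (hI : A ∩ A' = {0}) :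
    lamPM A' ≤ 1 / ((Fintype.card G : ℝ) * lamPM A) := by
  classical
  set Sm : Set (G → ℝ) := {f | f ≠ 0 ∧ (∀ x ∉ A, f x ≤ 0) ∧ ∀ x ∈ A, 0 ≤ f x} with hSm
  have hne : (lamSet Sm).Nonempty := by
    apply lamSet_nonempty
    refine ⟨?_, ?_, ?_⟩
    · intro hzero
      have h1 := congrFun hzero 0
      simp at h1
    · intro x hx
      beta_reduce
      rw [if_neg (fun h : x = 0 => hx (h ▸ hA.2))]
    · intro x _
      beta_reduce
      split <;> norm_num
  have hL0 : 0 < sInf (lamSet Sm) := lam_pos hne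
  obtain ⟨F, c₁, c₂, hPF, hF0, hc₁, hc₂, hid⟩ := master Sm hne
      (fun x => if x ∈ A then 1 else 0) (fun x => if x ∈ A then 0 else -1) (by
    intro f hre ha hb hsne
    refine ⟨sum_fs_ne hsne, ?_, ?_⟩
    · intro x hx
      have hfx : f x ≤ 0 := by
        have := hb x
        beta_reduce at this
        rw [if_neg hx] at this
        linarith
      have hfnx : f (-x) ≤ 0 := by
        have := hb (-x)
        beta_reduce at this
        rw [if_neg (not_mem_neg hA.1 hx)] at this
        linarith
      show (f x + f (-x)) / 2 ≤ 0
      linarith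
    · intro x hx
      have hfx : 0 ≤ f x := by
        have := ha x
        beta_reduce at this
        rw [if_pos hx] at this
        linarith
      have hfnx : 0 ≤ f (-x) := by
        have := ha (-x)
        beta_reduce at this
        rw [if_pos ((mem_neg_iff hA.1 x).2 hx)] at this
        linarith
      show 0 ≤ (f x + f (-x)) / 2
      linarith
  )
  set L := sInf (lamSet Sm) with hLdef
  have hidA : ∀ y ∈ A, y ≠ 0 → F y = -(c₁ y) - L := by
    intro y hyA hy0
    have h1 := hid y
    beta_reduce at h1
    rw [if_neg hy0, if_pos hyA, if_pos hyA] at h1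
    simp at h1
    linarith
  have hid0 : F 0 = 1 - c₁ 0 - L := by
    have h1 := hid 0
    beta_reduce at h1
    rw [if_pos rfl, if_pos hA.2, if_pos hA.2] at h1
    simp at h1
    linarith
  have hidout : ∀ y, y ∉ A → F y = c₂ y - L := by
    intro y hy
    have hy0 : y ≠ 0 := fun h => hy (h ▸ hA.2)
    have h1 := hid y
    beta_reduce at h1
    rw [if_neg hy0, if_neg hy, if_neg hy] at h1
    simp at h1
    linarith
  show lamPM A' ≤ 1 / ((Fintype.card G : ℝ) * L)
  refine conclude hL0 hPF ?_ ?_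
  · refine ⟨?_, ?_, ?_⟩
    · intro hzero
      have h1 := congrFun hzero 0
      simp only [Pi.zero_apply] at h1
      have : (0:ℝ) < F 0 + L := by linarith
      linarith
    · intro x hx
      obtain ⟨hxA, hx0⟩ := mem_A_of_notMem_A' hA' hU hx
      show F x + L ≤ 0
      rw [hidA x hxA hx0]
      have := hc₁ x
      linarith
    · intro x hx
      show 0 ≤ F x + L
      rcases eq_or_ne x 0 with rfl | hx0
      · linarith
      · have hxA : x ∉ A := notMem_A_of_mem_A' hI hx hx0
        rw [hidout x hxA]
        have := hc₂ x
        linarith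
  · rw [hid0]
    have := hc₁ 0
    linarith

/-! ### combining -/

lemma combine {S S' : Set (G → ℝ)} (hne : (lamSet S).Nonempty) (hne' : (lamSet S').Nonempty)
    (hpair : ∀ r ∈ lamSet S, ∀ s ∈ lamSet S', 1 / (Fintype.card G : ℝ) ≤ r * s)
    (hupper : sInf (lamSet S') ≤ 1 / ((Fintype.card G : ℝ) * sInf (lamSet S))) :
    sInf (lamSet S) * sInf (lamSet S') = 1 / (Fintype.card G : ℝ) := by
  have hq : (0:ℝ) < (Fintype.card G : ℝ) := card_pos
  set L := sInf (lamSet S) with hLdef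
  set L' := sInf (lamSet S') with hL'def
  have hL : 0 < L := lam_pos hne
  have hL' : 0 < L' := lam_pos hne'
  have hlow : 1 / ((Fintype.card G : ℝ) * L) ≤ L' := by
    refine le_csInf hne' fun s hs => ?_
    by_contra hcon
    push_neg at hcon
    have hs0 : 0 < s := lt_of_lt_of_le (by positivity) (ratio_lb hs)
    have h1 : L < 1 / ((Fintype.card G : ℝ) * s) := by
      rw [lt_div_iff₀ (by positivity)]
      rw [lt_div_iff₀ (by positivity)] at hcon
      nlinarith
    obtain ⟨r, hrmem, hrlt⟩ := exists_lt_of_csInf_lt hne h1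
    have hge := hpair r hrmem s hs
    have h2 : r * s < 1 / (Fintype.card G : ℝ) := by
      rw [lt_div_iff₀ (by positivity)] at hrlt
      rw [lt_div_iff₀ hq]
      nlinarith
    linarith
  have hup2 : L * L' ≤ 1 / (Fintype.card G : ℝ) := by
    have h5 : L * L' ≤ L * (1 / ((Fintype.card G : ℝ) * L)) :=
      mul_le_mul_of_nonneg_left hupper hL.le
    have h6 : L * (1 / ((Fintype.card G : ℝ) * L)) = 1 / (Fintype.card G : ℝ) := by
      rw [one_div, mul_inv, mul_comm ((Fintype.card G : ℝ))⁻¹, ← mul_assoc,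
        mul_inv_cancel₀ (ne_of_gt hL), one_mul, one_div]
    linarith
  have hlow2 : 1 / (Fintype.card G : ℝ) ≤ L * L' := by
    have h5 : L * (1 / ((Fintype.card G : ℝ) * L)) ≤ L * L' :=
      mul_le_mul_of_nonneg_left hlow hL.le
    have h6 : L * (1 / ((Fintype.card G : ℝ) * L)) = 1 / (Fintype.card G : ℝ) := by
      rw [one_div, mul_inv, mul_comm ((Fintype.card G : ℝ))⁻¹, ← mul_assoc,
        mul_inv_cancel₀ (ne_of_gt hL), one_mul, one_div]
    linarith
  linarith

end Stmt8Aux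

open Stmt8Aux in
theorem stmt8 {G : Type*} [AddCommGroup G] [Fintype G]
    (A A' : Set G) (hA : IsStandard A) (hA' : IsStandard A')
    (hU : A ∪ A' = Set.univ) (hI : A ∩ A' = {0}) :
    lam A * lam A' = 1 / (Fintype.card G : ℝ) ∧
    lamMinus A * lamPlus A' = 1 / (Fintype.card G : ℝ) ∧
    lamPM A * lamPM A' = 1 / (Fintype.card G : ℝ) := by
  classical
  have hne_lam : ∀ (B : Set G), IsStandard B → (lamSet {f : G → ℝ | f ≠ 0 ∧ ∀ x ∉ B, f x = 0}).Nonempty := by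
    intro B hB
    apply lamSet_nonempty
    refine ⟨?_, ?_⟩
    · intro hzero; have h1 := congrFun hzero 0; simp at h1
    · intro x hx; beta_reduce; rw [if_neg (fun h : x = 0 => hx (h ▸ hB.2))]
  have hne_minus : (lamSet {f : G → ℝ | f ≠ 0 ∧ ∀ x ∉ A, f x ≤ 0}).Nonempty := by
    apply lamSet_nonempty
    refine ⟨?_, ?_⟩
    · intro hzero; have h1 := congrFun hzero 0; simp at h1
    · intro x hx; beta_reduce; rw [if_neg (fun h : x = 0 => hx (h ▸ hA.2))]
  have hne_plus : (lamSet {f : G → ℝ | f ≠ 0 ∧ (∀ x ∉ A', f x = 0) ∧ ∀ x ∈ A', 0 ≤ f x}).Nonempty := by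
    apply lamSet_nonempty
    refine ⟨?_, ?_, ?_⟩
    · intro hzero; have h1 := congrFun hzero 0; simp at h1
    · intro x hx; beta_reduce; rw [if_neg (fun h : x = 0 => hx (h ▸ hA'.2))]
    · intro x _; beta_reduce; split <;> norm_num
  have hne_pm : ∀ (B : Set G), IsStandard B → (lamSet {f : G → ℝ | f ≠ 0 ∧ (∀ x ∉ B, f x ≤ 0) ∧ ∀ x ∈ B, 0 ≤ f x}).Nonempty := by
    intro B hB
    apply lamSet_nonempty
    refine ⟨?_, ?_, ?_⟩
    · intro hzero; have h1 := congrFun hzero 0; simp at h1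
    · intro x hx; beta_reduce; rw [if_neg (fun h : x = 0 => hx (h ▸ hB.2))]
    · intro x _; beta_reduce; split <;> norm_num
  refine ⟨?_, ?_, ?_⟩
  · exact combine (hne_lam A hA) (hne_lam A' hA')
      (fun r hr s hs => pair_lb (fun f hf g hg _ _ x hx0 => by
        by_cases hxA : x ∈ A
        · have hxA' : x ∉ A' := notMem_A_of_mem_A' (by rwa [Set.inter_comm] at hI) ?_ hx0
          · rw [hg.2 x hxA', mul_zero]
          · exact hxA
        · rw [hf.2 x hxA, zero_mul]) hr hs)
      (upper_case1 A A' hA hA' hU hI)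
  · exact combine hne_minus hne_plus
      (fun r hr s hs => pair_lb (fun f hf g hg _ _ x hx0 => by
        by_cases hxA : x ∈ A
        · have hxA' : x ∉ A' := notMem_A_of_mem_A' (by rwa [Set.inter_comm] at hI) hxA hx0
          rw [hg.2.1 x hxA', mul_zero]
        · have hxA' : x ∈ A' := by
            have : x ∈ A ∪ A' := hU ▸ Set.mem_univ x
            rcases this with h | h
            · exact absurd h hxA
            · exact h
          exact mul_nonpos_of_nonpos_of_nonneg (hf.2 x hxA) (hg.2.2 x hxA')) hr hs)
      (upper_case2 A A' hA hA' hU hI)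
  · exact combine (hne_pm A hA) (hne_pm A' hA')
      (fun r hr s hs => pair_lb (fun f hf g hg _ _ x hx0 => by
        by_cases hxA : x ∈ A
        · have hxA' : x ∉ A' := notMem_A_of_mem_A' (by rwa [Set.inter_comm] at hI) hxA hx0
          exact mul_nonpos_of_nonneg_of_nonpos (hf.2.2 x hxA) (hg.2.1 x hxA')
        · have hxA' : x ∈ A' := by
            have : x ∈ A ∪ A' := hU ▸ Set.mem_univ x
            rcases this with h | h
            · exact absurd h hxA
            · exact h
          exact mul_nonpos_of_nonpos_of_nonneg (hf.2.1 x hxA) (hg.2.2 x hxA')) hr hs)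
      (upper_case3 A A' hA hA' hU hI)
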